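/- Suppose there exists a constant D > 0 such that h < D and D·b(t+h)² ≤ Q(t) for all t ≥ t₀, and set C := D − h and V(t) := A(t)² − D ∫_{t−h}^{t} b(s+h)² x(s)² ds. If V(t₀) ≥ 0, then every solution x of the delay differential equation satisfies x(t)² ≥ C · V(t₀) · ∫_{t₀}^{t} b(s+h)² ds for all t ≥ t₀. In particular, if V(t₀) > 0 and ∫_{t₀}^{t} b(s+h)² ds → ∞ as t → ∞, then |x(t)| → ∞, so the zero solution is unstable. -/

import Mathlib

open Set MeasureTheory intervalIntegral Filter

/-- FTC: one-sided/within derivative of `u ↦ ∫_c^u f` on `Ici c`. -/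
lemma ftc_Ici {c : ℝ} {f : ℝ → ℝ} (hf : ContinuousOn f (Set.Ici c)) {p : ℝ} (hp : c ≤ p) :
    HasDerivWithinAt (fun u => ∫ s in c..u, f s) (f p) (Set.Ici c) p := by
  have hint : IntervalIntegrable f volume c p :=
    (hf.mono (by rw [Set.uIcc_of_le hp]; exact Set.Icc_subset_Ici_self)).intervalIntegrable
  rcases eq_or_lt_of_le hp with rfl | hlt
  · exact intervalIntegral.integral_hasDerivWithinAt_right (t := Set.Ioi c) hint
      ⟨Set.Ici c, Filter.mem_of_superset self_mem_nhdsWithin Set.Ioi_subset_Ici_self,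
        hf.aestronglyMeasurable measurableSet_Ici⟩
      ((hf.continuousWithinAt Set.self_mem_Ici).mono Set.Ioi_subset_Ici_self)
  · have hmem : Set.Ici c ∈ nhds p := Ici_mem_nhds hlt
    have hca : ContinuousAt f p := (hf.continuousAt hmem)
    have hmeas : StronglyMeasurableAtFilter f (nhds p) volume :=
      ⟨Set.Ici c, hmem, hf.aestronglyMeasurable measurableSet_Ici⟩
    exact (intervalIntegral.integral_hasDerivAt_right hint hmeas hca).hasDerivWithinAt

/-- Cauchy–Schwarz for interval integrals, elementary version. -/
lemma cs_interval {u v : ℝ} (huv : u ≤ v) {f : ℝ → ℝ} (hf : ContinuousOn f (Set.Icc u v)) :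
    (∫ s in u..v, f s) ^ 2 ≤ (v - u) * ∫ s in u..v, (f s) ^ 2 := by
  rcases eq_or_lt_of_le huv with rfl | hlt
  · simp
  have hL : (0:ℝ) < v - u := by linarith
  have hint : IntervalIntegrable f volume u v := by
    apply ContinuousOn.intervalIntegrable; rwa [Set.uIcc_of_le huv]
  have hint2 : IntervalIntegrable (fun s => (f s) ^ 2) volume u v := by
    apply ContinuousOn.intervalIntegrable; rw [Set.uIcc_of_le huv]; exact hf.pow 2
  set w := ∫ s in u..v, f s with hw
  set c := w / (v - u) with hc
  have key : 0 ≤ ∫ s in u..v, (f s - c) ^ 2 :=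
    intervalIntegral.integral_nonneg huv (fun s _ => sq_nonneg _)
  have expand : (∫ s in u..v, (f s - c) ^ 2)
      = (∫ s in u..v, (f s) ^ 2) - 2 * c * w + (v - u) * c ^ 2 := by
    have e1 : ∀ s, (f s - c) ^ 2 = (f s) ^ 2 - (2 * c) * f s + c ^ 2 := by intro s; ring
    rw [intervalIntegral.integral_congr (g := fun s => (f s) ^ 2 - (2 * c) * f s + c ^ 2)
      (fun s _ => e1 s)]
    rw [intervalIntegral.integral_add ((hint2.sub (hint.const_mul (2 * c)))) intervalIntegrable_const,
      intervalIntegral.integral_sub hint2 (hint.const_mul (2 * c)),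
      intervalIntegral.integral_const_mul, intervalIntegral.integral_const]
    simp only [smul_eq_mul, ← hw]
  rw [expand] at key
  have hcw : c * (v - u) = w := div_mul_cancel₀ w (ne_of_gt hL)
  have key2 : 0 ≤ (v - u) * ((∫ s in u..v, (f s) ^ 2) - 2 * c * w + (v - u) * c ^ 2) :=
    mul_nonneg hL.le key
  have e2 : (v - u) * ((∫ s in u..v, (f s) ^ 2) - 2 * c * w + (v - u) * c ^ 2)
      = (v - u) * (∫ s in u..v, (f s) ^ 2) - w ^ 2 := by
    rw [← hcw]; ring
  show w ^ 2 ≤ (v - u) * ∫ s in u..v, (f s) ^ 2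
  linarith [key2, e2 ▸ key2]

set_option maxHeartbeats 1000000 in
theorem stmt19 (t0 h D : ℝ) (hh : 0 < h) (hD : 0 < D) (hhD : h < D)
    (a b x : ℝ → ℝ) (ha : Continuous a) (hb : Continuous b)
    -- x is a solution of the delay differential equation
    (hxc : ContinuousOn x (Set.Ici (t0 - h)))
    (hx : ∀ t, t0 ≤ t → HasDerivWithinAt x (a t * x t + b t * x (t - h)) (Set.Ici t0) t)
    -- the auxiliary functions Q, A, V and the constant C
    (Q A V : ℝ → ℝ) (C : ℝ)
    (hQ : ∀ t, Q t = a t + b (t + h))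
    (hA : ∀ t, A t = x t + ∫ s in (t - h)..t, b (s + h) * x s)
    (hV : ∀ t, V t = (A t) ^ 2 - D * ∫ s in (t - h)..t, (b (s + h)) ^ 2 * (x s) ^ 2)
    (hC : C = D - h)
    -- the condition D·b(t+h)² ≤ Q(t)
    (hcond : ∀ t, t0 ≤ t → D * (b (t + h)) ^ 2 ≤ Q t)
    (hV0 : 0 ≤ V t0) :
    (∀ t, t0 ≤ t → C * V t0 * (∫ s in t0..t, (b (s + h)) ^ 2) ≤ (x t) ^ 2) ∧
    (0 < V t0 →
      Filter.Tendsto (fun t => ∫ s in t0..t, (b (s + h)) ^ 2) Filter.atTop Filter.atTop →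
      Filter.Tendsto (fun t => |x t|) Filter.atTop Filter.atTop) := by
  have hth : t0 - h ≤ t0 := by linarith
  have hbh : Continuous (fun s : ℝ => b (s + h)) := hb.comp (continuous_id.add continuous_const)
  have hg : ContinuousOn (fun s => b (s + h) * x s) (Set.Ici (t0 - h)) := hbh.continuousOn.mul hxc
  have hg2 : ContinuousOn (fun s => (b (s + h)) ^ 2 * (x s) ^ 2) (Set.Ici (t0 - h)) :=
    ((hbh.pow 2).continuousOn).mul (hxc.pow 2)
  have hQc : Continuous Q := by
    have hQe : Q = fun t => a t + b (t + h) := funext hQ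
    rw [hQe]; exact ha.add hbh
  have hII : ∀ (f : ℝ → ℝ), ContinuousOn f (Set.Ici (t0 - h)) → ∀ u v, t0 - h ≤ u → t0 - h ≤ v →
      IntervalIntegrable f volume u v := by
    intro f hf u v hu hv
    apply (hf.mono ?_).intervalIntegrable
    intro z hz
    rcases Set.mem_uIcc.mp hz with ⟨h1, _⟩ | ⟨h1, _⟩ <;> exact Set.mem_Ici.mpr (by linarith)
  have hsplit : ∀ (f : ℝ → ℝ), ContinuousOn f (Set.Ici (t0 - h)) → ∀ τ, t0 ≤ τ →
      (∫ s in (τ - h)..τ, f s)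
        = (∫ s in (t0 - h)..τ, f s) - ∫ s in (t0 - h)..(τ - h), f s := by
    intro f hf τ hτ
    have h1 := intervalIntegral.integral_add_adjacent_intervals
      (hII f hf (t0 - h) (τ - h) le_rfl (by linarith))
      (hII f hf (τ - h) τ (by linarith) (by linarith))
    linarith
  set G : ℝ → ℝ := fun u => ∫ s in (t0 - h)..u, b (s + h) * x s with hGdef
  set G2 : ℝ → ℝ := fun u => ∫ s in (t0 - h)..u, (b (s + h)) ^ 2 * (x s) ^ 2 with hG2def
  set R : ℝ → ℝ := fun u => ∫ s in t0..u, Q s with hRdef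
  have hGd : ∀ p, t0 - h ≤ p → HasDerivWithinAt G (b (p + h) * x p) (Set.Ici (t0 - h)) p :=
    fun p hp => ftc_Ici hg hp
  have hG2d : ∀ p, t0 - h ≤ p →
      HasDerivWithinAt G2 ((b (p + h)) ^ 2 * (x p) ^ 2) (Set.Ici (t0 - h)) p :=
    fun p hp => ftc_Ici hg2 hp
  have hRd : ∀ t, t0 ≤ t → HasDerivWithinAt R (Q t) (Set.Ici t0) t :=
    fun t ht => ftc_Ici hQc.continuousOn ht
  have hsub : Set.Ici t0 ⊆ Set.Ici (t0 - h) := Set.Ici_subset_Ici.mpr hth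
  have hshift : ∀ (F : ℝ → ℝ) (d : ℝ → ℝ),
      (∀ p, t0 - h ≤ p → HasDerivWithinAt F (d p) (Set.Ici (t0 - h)) p) →
      ∀ t, t0 ≤ t → HasDerivWithinAt (fun τ => F (τ - h)) (d (t - h)) (Set.Ici t0) t := by
    intro F d hF t ht
    have hin : HasDerivWithinAt (fun τ : ℝ => τ - h) 1 (Set.Ici t0) t :=
      ((hasDerivAt_id t).sub_const h).hasDerivWithinAt
    have hmaps : Set.MapsTo (fun τ : ℝ => τ - h) (Set.Ici t0) (Set.Ici (t0 - h)) := by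
      intro z hz
      have hz' : t0 ≤ z := hz
      show z - h ∈ Set.Ici (t0 - h)
      exact Set.mem_Ici.mpr (by linarith)
    have hcomp := HasDerivWithinAt.comp t (hF (t - h) (by linarith)) hin hmaps
    rw [mul_one] at hcomp
    exact hcomp
  have hAeq : ∀ τ ∈ Set.Ici t0, A τ = x τ + (G τ - G (τ - h)) := by
    intro τ hτ
    rw [hA τ, hsplit _ hg τ hτ]
  have hAd : ∀ t, t0 ≤ t → HasDerivWithinAt A (Q t * x t) (Set.Ici t0) t := by
    intro t ht
    have h1 : HasDerivWithinAt G (b (t + h) * x t) (Set.Ici t0) t :=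
      (hGd t (by linarith)).mono hsub
    have h2 : HasDerivWithinAt (fun τ => G (τ - h)) (b (t - h + h) * x (t - h)) (Set.Ici t0) t :=
      hshift G _ hGd t ht
    have h3 := (hx t ht).add (h1.sub h2)
    have h4 : HasDerivWithinAt A
        (a t * x t + b t * x (t - h) + (b (t + h) * x t - b (t - h + h) * x (t - h)))
        (Set.Ici t0) t := h3.congr hAeq (hAeq t ht)
    have e : a t * x t + b t * x (t - h) + (b (t + h) * x t - b (t - h + h) * x (t - h))
        = Q t * x t := by
      have e0 : t - h + h = t := by ring
      rw [e0, hQ]; ring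
    rwa [e] at h4
  have hVeq : ∀ τ ∈ Set.Ici t0, V τ = (A τ) ^ 2 - D * (G2 τ - G2 (τ - h)) := by
    intro τ hτ; rw [hV τ, hsplit _ hg2 τ hτ]
  set Vd : ℝ → ℝ := fun t => 2 * A t * (Q t * x t)
      - D * ((b (t + h)) ^ 2 * (x t) ^ 2 - (b t) ^ 2 * (x (t - h)) ^ 2) with hVddef
  have hVd : ∀ t, t0 ≤ t → HasDerivWithinAt V (Vd t) (Set.Ici t0) t := by
    intro t ht
    have h1 : HasDerivWithinAt (fun τ => (A τ) ^ 2) (2 * A t * (Q t * x t)) (Set.Ici t0) t := by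
      have h0 := (hAd t ht).pow 2
      norm_num at h0
      exact h0
    have h2 : HasDerivWithinAt G2 ((b (t + h)) ^ 2 * (x t) ^ 2) (Set.Ici t0) t :=
      (hG2d t (by linarith)).mono hsub
    have h3 : HasDerivWithinAt (fun τ => G2 (τ - h)) ((b (t - h + h)) ^ 2 * (x (t - h)) ^ 2)
        (Set.Ici t0) t := hshift G2 _ hG2d t ht
    have h4 := h1.sub ((h2.sub h3).const_mul D)
    have e0 : t - h + h = t := by ring
    rw [e0] at h4
    exact (h4.congr hVeq (hVeq t ht))
  set E : ℝ → ℝ := fun u => Real.exp (-(R u)) with hEdef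
  set W : ℝ → ℝ := fun u => V u * E u with hWdef
  have hEpos : ∀ u, 0 < E u := fun u => Real.exp_pos _
  have hEd : ∀ t, t0 ≤ t → HasDerivWithinAt E (E t * (-(Q t))) (Set.Ici t0) t := by
    intro t ht
    have h0 := ((hRd t ht).neg).exp
    simpa [hEdef] using h0
  have hWd : ∀ t, t0 ≤ t →
      HasDerivWithinAt W (Vd t * E t + V t * (E t * (-(Q t)))) (Set.Ici t0) t :=
    fun t ht => (hVd t ht).mul (hEd t ht)
  have hkey : ∀ y, t0 ≤ y → 0 ≤ Vd y * E y + V y * (E y * (-(Q y))) := by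
    intro y hy
    obtain ⟨Pt, hPtdef⟩ : ∃ P, P = ∫ s in (y - h)..y, (b (s + h)) ^ 2 * (x s) ^ 2 := ⟨_, rfl⟩
    obtain ⟨w, hwdef⟩ : ∃ w, w = ∫ s in (y - h)..y, b (s + h) * x s := ⟨_, rfl⟩
    have hPt0 : 0 ≤ Pt := by
      rw [hPtdef]
      exact intervalIntegral.integral_nonneg (by linarith) (fun u _ => by positivity)
    have hIcc : Set.Icc (y - h) y ⊆ Set.Ici (t0 - h) := by
      intro z hz
      have := hz.1
      exact Set.mem_Ici.mpr (by linarith)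
    have hcs0 := cs_interval (by linarith : y - h ≤ y) (hg.mono hIcc)
    have hgg : (∫ s in (y - h)..y, (b (s + h) * x s) ^ 2) = Pt := by
      rw [hPtdef]; apply intervalIntegral.integral_congr; intro s _; ring
    have hlen : y - (y - h) = h := by ring
    rw [hlen, hgg, ← hwdef] at hcs0
    have hAy : A y = x y + w := by rw [hA y, ← hwdef]
    have hVy : V y = (A y) ^ 2 - D * Pt := by rw [hV y, ← hPtdef]
    have hq := hcond y hy
    have hQ0 : 0 ≤ Q y := le_trans (by positivity) hq
    have halg : 0 ≤ Vd y - Q y * V y := by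
      simp only [hVddef]
      rw [hVy]
      have e1 : Q y * w ^ 2 ≤ Q y * (h * Pt) := mul_le_mul_of_nonneg_left hcs0 hQ0
      have e2 : Q y * (h * Pt) ≤ Q y * (D * Pt) :=
        mul_le_mul_of_nonneg_left (by nlinarith [hPt0]) hQ0
      have e3 : D * (b (y + h)) ^ 2 * (x y) ^ 2 ≤ Q y * (x y) ^ 2 :=
        mul_le_mul_of_nonneg_right hq (sq_nonneg _)
      have e4 : 0 ≤ D * ((b y) ^ 2 * (x (y - h)) ^ 2) := by positivity
      have idty : 2 * A y * (Q y * x y) - Q y * (A y) ^ 2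
          = Q y * (x y) ^ 2 - Q y * (A y - x y) ^ 2 := by ring
      have hwA : A y - x y = w := by rw [hAy]; ring
      rw [hwA] at idty
      nlinarith [e1, e2, e3, e4, idty]
    have hfact : Vd y * E y + V y * (E y * (-(Q y))) = E y * (Vd y - Q y * V y) := by ring
    rw [hfact]
    exact mul_nonneg (hEpos y).le halg
  have hmono : MonotoneOn W (Set.Ici t0) := by
    apply monotoneOn_of_deriv_nonneg (convex_Ici t0)
    · intro y hy; exact (hWd y hy).continuousWithinAt
    · intro y hy
      rw [interior_Ici] at hy
      exact ((hWd y hy.le).hasDerivAt (Ici_mem_nhds hy)).differentiableAt.differentiableWithinAt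
    · intro y hy
      rw [interior_Ici] at hy
      rw [((hWd y hy.le).hasDerivAt (Ici_mem_nhds hy)).deriv]
      exact hkey y hy.le
  have hVlow : ∀ t, t0 ≤ t → V t0 * (1 + D * ∫ s in t0..t, (b (s + h)) ^ 2) ≤ V t := by
    intro t ht
    have hwmono : W t0 ≤ W t := hmono Set.self_mem_Ici (Set.mem_Ici.mpr ht) ht
    have hR0 : R t0 = 0 := intervalIntegral.integral_same
    have hWt0 : W t0 = V t0 := by simp [hWdef, hEdef, hR0]
    have h1 : V t0 * Real.exp (R t) ≤ V t := by
      have h2 : V t0 ≤ V t * Real.exp (-(R t)) := by rw [← hWt0]; exact hwmono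
      calc V t0 * Real.exp (R t) ≤ (V t * Real.exp (-(R t))) * Real.exp (R t) :=
            mul_le_mul_of_nonneg_right h2 (Real.exp_pos _).le
        _ = V t := by rw [mul_assoc, ← Real.exp_add]; simp
    have hRge : D * (∫ s in t0..t, (b (s + h)) ^ 2) ≤ R t := by
      have hint1 : IntervalIntegrable (fun s => D * (b (s + h)) ^ 2) volume t0 t :=
        (continuous_const.mul (hbh.pow 2)).intervalIntegrable _ _
      have hint2 : IntervalIntegrable Q volume t0 t := hQc.intervalIntegrable _ _
      have h3 := intervalIntegral.integral_mono_on ht hint1 hint2 (fun s hs => hcond s hs.1)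
      rwa [intervalIntegral.integral_const_mul] at h3
    have hexp : 1 + D * (∫ s in t0..t, (b (s + h)) ^ 2) ≤ Real.exp (R t) := by
      have := Real.add_one_le_exp (R t)
      linarith
    calc V t0 * (1 + D * ∫ s in t0..t, (b (s + h)) ^ 2) ≤ V t0 * Real.exp (R t) :=
          mul_le_mul_of_nonneg_left hexp hV0
      _ ≤ V t := h1
  have main : ∀ t, t0 ≤ t → C * V t0 * (∫ s in t0..t, (b (s + h)) ^ 2) ≤ (x t) ^ 2 := by
    intro t ht
    obtain ⟨It, hItdef⟩ : ∃ I, I = ∫ s in t0..t, (b (s + h)) ^ 2 := ⟨_, rfl⟩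
    obtain ⟨Pt, hPtdef⟩ : ∃ P, P = ∫ s in (t - h)..t, (b (s + h)) ^ 2 * (x s) ^ 2 := ⟨_, rfl⟩
    obtain ⟨w, hwdef⟩ : ∃ w, w = ∫ s in (t - h)..t, b (s + h) * x s := ⟨_, rfl⟩
    have hPt0 : 0 ≤ Pt := by
      rw [hPtdef]
      exact intervalIntegral.integral_nonneg (by linarith) (fun u _ => by positivity)
    have hIcc : Set.Icc (t - h) t ⊆ Set.Ici (t0 - h) := by
      intro z hz
      have := hz.1
      exact Set.mem_Ici.mpr (by linarith)
    have hcs0 := cs_interval (by linarith : t - h ≤ t) (hg.mono hIcc)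
    have hgg : (∫ s in (t - h)..t, (b (s + h) * x s) ^ 2) = Pt := by
      rw [hPtdef]; apply intervalIntegral.integral_congr; intro s _; ring
    have hlen : t - (t - h) = h := by ring
    rw [hlen, hgg, ← hwdef] at hcs0
    have hAt : A t = x t + w := by rw [hA t, ← hwdef]
    have hVt : V t = (x t + w) ^ 2 - D * Pt := by rw [hV t, ← hPtdef, hAt]
    have step1 : (D - h) * V t ≤ D * (x t) ^ 2 := by
      rw [hVt]
      have hsq := sq_nonneg (h * x t - (D - h) * w)
      have hT : 0 ≤ D * (D - h) * (h * Pt - w ^ 2) :=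
        mul_nonneg (mul_nonneg hD.le (by linarith)) (by linarith)
      nlinarith [hsq, hT, hh]
    have step2 : V t0 * (1 + D * It) ≤ V t := by rw [hItdef]; exact hVlow t ht
    have hfin : D * (C * V t0 * It) ≤ D * (x t) ^ 2 := by
      have m1 : (D - h) * (V t0 * (1 + D * It)) ≤ (D - h) * V t :=
        mul_le_mul_of_nonneg_left step2 (by linarith)
      have m2 : 0 ≤ (D - h) * V t0 := mul_nonneg (by linarith) hV0
      rw [hC]
      nlinarith [m1, step1, m2]
    rw [← hItdef]
    exact le_of_mul_le_mul_left hfin hD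
  refine ⟨main, ?_⟩
  intro hVpos hItend
  have hCV : 0 < C * V t0 := mul_pos (by rw [hC]; linarith) hVpos
  rw [Filter.tendsto_atTop]
  intro K
  have h1 := (Filter.tendsto_atTop.mp (hItend.const_mul_atTop hCV)) (K ^ 2)
  filter_upwards [h1, Filter.eventually_ge_atTop t0] with t hK ht
  have h3 : K ^ 2 ≤ (x t) ^ 2 := le_trans hK (main t ht)
  calc K ≤ |K| := le_abs_self K
    _ ≤ |x t| := by
        rw [← Real.sqrt_sq_eq_abs, ← Real.sqrt_sq_eq_abs]
        exact Real.sqrt_le_sqrt h3
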